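/- Suppose f ∈ ind_Ū^G(Ψ̄)^K, where Ψ is a nondegenerate character of Ū of conductor 𝔭. Then for every μ ∈ X_*(A) that is not strictly dominant, f(m_μ) = 0. Consequently (using the Iwasawa decomposition G = ŪMK) the set {φ_λ : λ ∈ X_*(A)^{++}} is a ℂ-basis of ind_Ū^G(Ψ̄)^K. -/

import Mathlib

open Pointwise

/-!
STATEMENT 4: Suppose `f ∈ ind_Ū^G(Ψ̄)^K`, where `Ψ` is a nondegenerate character of `Ū`
of conductor `𝔭`.  Then for every `μ ∈ X_*(A)` that is not strictly dominant,
`f(m_μ) = 0`.  Consequently (using the Iwasawa decomposition `G = ŪMK`) the set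
`{φ_λ : λ ∈ X_*(A)^{++}}` is a `ℂ`-basis of `ind_Ū^G(Ψ̄)^K`.

Conventions:
* `Λ = X_*(A)` with simple roots indexed by `Δ` and pairings `pairing α = ⟨α,-⟩`;
  strict dominance of `l` means `∀ α, 0 < pairing α l`; `mm : λ ↦ m_λ`.
* `Ψ : Ū → ℂ^×` is a smooth character, nondegenerate of conductor `𝔭`: with respect to
  the filtration `X α k = X_{-α+k}` of the root subgroups `U_{-α}` (with
  `X α 0 = U_{-α} ∩ K`, `X α 1 = U_{-α} ∩ I`, `m_λ X_{-α+k} m_λ^{-1} = X_{-α+k+⟨α,λ⟩}`),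
  `Ψ` is nontrivial on `U_{-α} ∩ K` and trivial on `U_{-α} ∩ I` for each simple `α`.
* `indK = ind_Ū^G(Ψ̄)^K` is the set of smooth functions `f : G → ℂ` with
  `f(ug) = Ψ̄(u) f(g)` for `u ∈ Ū`, right `K`-invariant, with support compact mod `Ū`.
* For strictly dominant `λ`, `φ λ ∈ indK` is the element supported on `Ū m_λ K` with
  `φ λ (u m_λ k) = δ_P̄(m_λ)^{1/2} Ψ̄(u)`; it is characterized by the hypotheses
  `hφmem`, `hφsupp`, `hφval` below.
* `hIwasawa` is the Iwasawa decomposition `G = Ū M K` (with `M = M° ⟨m_λ⟩`, `M° ⊆ K`),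
  `hdisj` the uniqueness of the `X_*(A)`-coordinate in it, and `hfin` the discreteness of
  `{m_λ}` modulo `Ū` against compact sets.
-/
theorem stmt_4 {G : Type} [Group G] [TopologicalSpace G]
    {Λ Δ : Type} [AddCommGroup Λ] (pairing : Δ → Λ →+ ℤ)
    (mm : Λ → G) (hmm : ∀ a b : Λ, mm (a + b) = mm a * mm b)
    (Ubar K I : Subgroup G) (Uneg : Δ → Subgroup G) (hUneg : ∀ α, Uneg α ≤ Ubar)
    -- filtration of the root subgroups
    (X : Δ → ℤ → Subgroup G)
    (hXmono : ∀ α (k k' : ℤ), k ≤ k' → X α k' ≤ X α k)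
    (hXU : ∀ α k, X α k ≤ Uneg α)
    (hX0 : ∀ α, X α 0 = Uneg α ⊓ K)
    (hX1 : ∀ α, X α 1 = Uneg α ⊓ I)
    (hXconj : ∀ α (k : ℤ) (l : Λ) (u : G),
      u ∈ X α k ↔ mm l * u * (mm l)⁻¹ ∈ X α (k + pairing α l))
    -- Ψ : a smooth nondegenerate character of Ū of conductor 𝔭
    (Ψ : G → ℂ)
    (hΨmul : ∀ u ∈ Ubar, ∀ v ∈ Ubar, Ψ (u * v) = Ψ u * Ψ v)
    (hΨunit : ∀ u ∈ Ubar, ‖Ψ u‖ = 1)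
    (hcond₁ : ∀ α : Δ, ∃ u ∈ Uneg α ⊓ K, Ψ u ≠ 1)
    (hcond₂ : ∀ α : Δ, ∀ u ∈ Uneg α ⊓ I, Ψ u = 1)
    -- δ_P̄^{1/2}
    (δhalf : Λ → ℂ) (hδne : ∀ l, δhalf l ≠ 0)
    -- structure theory: Iwasawa decomposition and its discreteness properties
    (hIwasawa : ∀ g : G, ∃ u ∈ Ubar, ∃ l : Λ, ∃ k ∈ K, g = u * mm l * k)
    (hdisj : ∀ l l' : Λ, (∀ α, 0 < pairing α l) → (∀ α, 0 < pairing α l') →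
      mm l' ∈ (Ubar : Set G) * {mm l} * (K : Set G) → l' = l)
    (hfin : ∀ C : Set G, IsCompact C → {l : Λ | mm l ∈ (Ubar : Set G) * C}.Finite)
    -- the space ind_Ū^G(Ψ̄)^K
    (indK : Set (G → ℂ))
    (hindK : indK = {f : G → ℂ |
      (∀ u ∈ Ubar, ∀ g : G, f (u * g) = (starRingEnd ℂ) (Ψ u) * f g) ∧
      (∀ k ∈ K, ∀ g : G, f (g * k) = f g) ∧
      IsLocallyConstant f ∧
      ∃ C : Set G, IsCompact C ∧ Function.support f ⊆ (Ubar : Set G) * C})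
    -- the geometric basis elements φ_λ, λ strictly dominant
    (φ : Λ → G → ℂ)
    (hφmem : ∀ l : Λ, (∀ α, 0 < pairing α l) → φ l ∈ indK)
    (hφsupp : ∀ l : Λ, (∀ α, 0 < pairing α l) →
      Function.support (φ l) ⊆ (Ubar : Set G) * {mm l} * (K : Set G))
    (hφval : ∀ l : Λ, (∀ α, 0 < pairing α l) → φ l (mm l) = δhalf l) :
    -- (1) f vanishes at m_μ for μ not strictly dominant
    (∀ f ∈ indK, ∀ l : Λ, ¬ (∀ α, 0 < pairing α l) → f (mm l) = 0) ∧
    -- (2) {φ_λ | λ ∈ X_*(A)^{++}} is a ℂ-basis of ind_Ū^G(Ψ̄)^K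
    LinearIndependent ℂ (fun l : {l : Λ // ∀ α, 0 < pairing α l} => φ l.1) ∧
    (∀ f ∈ indK, f ∈ Submodule.span ℂ
      (Set.range fun l : {l : Λ // ∀ α, 0 < pairing α l} => φ l.1)) := by
  classical
  have hmm0 : mm 0 = 1 := by
    have h := hmm 0 0
    rw [add_zero] at h
    have : mm 0 * mm 0 = mm 0 * 1 := by rw [mul_one]; exact h.symm
    exact mul_left_cancel this
  have hmminv : ∀ l : Λ, mm (-l) = (mm l)⁻¹ := by
    intro l
    have h := hmm (-l) l
    rw [neg_add_cancel, hmm0] at h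
    exact eq_inv_of_mul_eq_one_left h.symm
  -- Part (1): vanishing at non-strictly-dominant points
  have key : ∀ f ∈ indK, ∀ l : Λ, ¬ (∀ α, 0 < pairing α l) → f (mm l) = 0 := by
    intro f hf l hl
    rw [hindK] at hf
    obtain ⟨hfU, hfK, -, -⟩ := hf
    push_neg at hl
    obtain ⟨α, hα⟩ := hl
    have hα' : pairing α l ≤ 0 := hα
    obtain ⟨u, huK, hu⟩ := hcond₁ α
    have huX : u ∈ X α 0 := by rw [hX0]; exact huK
    have hv : mm (-l) * u * (mm (-l))⁻¹ ∈ X α (0 + pairing α (-l)) :=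
      (hXconj α 0 (-l) u).mp huX
    rw [hmminv, inv_inv] at hv
    have h0 : (0:ℤ) ≤ 0 + pairing α (-l) := by
      rw [zero_add, map_neg]; omega
    have hvK : (mm l)⁻¹ * u * mm l ∈ K := by
      have hX := hXmono α 0 _ h0 hv
      rw [hX0] at hX
      exact hX.2
    have hUb : u ∈ Ubar := hUneg α huK.1
    have e1 : mm l * ((mm l)⁻¹ * u * mm l) = u * mm l := by group
    have e : (starRingEnd ℂ) (Ψ u) * f (mm l) = f (mm l) := by
      rw [← hfU u hUb (mm l), ← e1]
      exact hfK _ hvK (mm l)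
    by_contra hne
    have h1 : (starRingEnd ℂ) (Ψ u) = 1 := by
      have := mul_right_cancel₀ hne (e.trans (one_mul (f (mm l))).symm)
      exact this
    exact hu ((starRingEnd ℂ).injective (by rw [h1, map_one]))
  refine ⟨key, ?_, ?_⟩
  · -- linear independence
    rw [linearIndependent_iff']
    intro s g hg i hi
    have h := congrFun hg (mm i.1)
    simp only [Finset.sum_apply, Pi.smul_apply, smul_eq_mul, Pi.zero_apply] at h
    rw [Finset.sum_eq_single i] at h
    · rw [hφval i.1 i.2] at h
      exact (mul_eq_zero.mp h).resolve_right (hδne i.1)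
    · intro j hj hji
      by_contra hne
      have hφne : φ j.1 (mm i.1) ≠ 0 := fun h0 => hne (by rw [h0, mul_zero])
      have hmem : mm i.1 ∈ (Ubar : Set G) * {mm j.1} * (K : Set G) :=
        hφsupp j.1 j.2 hφne
      exact hji (Subtype.ext (hdisj j.1 i.1 j.2 i.2 hmem).symm)
    · intro h; exact absurd hi h
  · -- spanning
    intro f hf
    have hf' := hf
    rw [hindK] at hf'
    obtain ⟨hfU, hfK, -, C, hC, hsupp⟩ := hf'
    set Sd : Finset Λ := (hfin C hC).toFinset.filter (fun l => ∀ α, 0 < pairing α l)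
      with hSddef
    have hmemSd : ∀ l ∈ Sd, ∀ α, 0 < pairing α l := by
      intro l hl
      exact (Finset.mem_filter.mp hl).2
    have heq : f = ∑ l ∈ Sd, (f (mm l) / δhalf l) • φ l := by
      funext g
      obtain ⟨u, hu, l, k, hk, rfl⟩ := hIwasawa g
      have main : f (mm l) = ∑ l' ∈ Sd, (f (mm l') / δhalf l') * φ l' (mm l) := by
        by_cases hdom : ∀ α, 0 < pairing α l
        · by_cases hlS : l ∈ Sd
          · rw [Finset.sum_eq_single l]
            · rw [hφval l hdom, div_mul_cancel₀ _ (hδne l)]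
            · intro l' hl' hne
              have h0 : φ l' (mm l) = 0 := by
                by_contra h0
                exact hne (hdisj l' l (hmemSd l' hl') hdom
                  (hφsupp l' (hmemSd l' hl') h0)).symm
              rw [h0, mul_zero]
            · intro h; exact absurd hlS h
          · have hf0 : f (mm l) = 0 := by
              by_contra h0
              have h1 : mm l ∈ (Ubar : Set G) * C := hsupp h0
              have h2 : l ∈ (hfin C hC).toFinset := (hfin C hC).mem_toFinset.mpr h1
              exact hlS (Finset.mem_filter.mpr ⟨h2, hdom⟩)
            rw [hf0]
            symm
            apply Finset.sum_eq_zero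
            intro l' hl'
            have h0 : φ l' (mm l) = 0 := by
              by_contra h0
              have hll' : l = l' :=
                hdisj l' l (hmemSd l' hl') hdom (hφsupp l' (hmemSd l' hl') h0)
              exact hlS (by rw [hll']; exact hl')
            rw [h0, mul_zero]
        · rw [key f hf l hdom]
          symm
          apply Finset.sum_eq_zero
          intro l' hl'
          rw [key (φ l') (hφmem l' (hmemSd l' hl')) l hdom, mul_zero]
      have hterm : ∀ l' ∈ Sd,
          φ l' (u * mm l * k) = (starRingEnd ℂ) (Ψ u) * φ l' (mm l) := by
        intro l' hl'
        have hφ := hφmem l' (hmemSd l' hl')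
        rw [hindK] at hφ
        obtain ⟨hU', hK', -, -⟩ := hφ
        rw [mul_assoc u (mm l) k, hU' u hu, hK' k hk]
      calc f (u * mm l * k) = (starRingEnd ℂ) (Ψ u) * f (mm l) := by
            rw [mul_assoc u (mm l) k, hfU u hu, hfK k hk]
        _ = (starRingEnd ℂ) (Ψ u) * ∑ l' ∈ Sd, (f (mm l') / δhalf l') * φ l' (mm l) := by
            rw [main]
        _ = ∑ l' ∈ Sd, (f (mm l') / δhalf l') * φ l' (u * mm l * k) := by
            rw [Finset.mul_sum]
            refine Finset.sum_congr rfl fun l' hl' => ?_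
            rw [hterm l' hl']
            ring
        _ = (∑ l' ∈ Sd, (f (mm l') / δhalf l') • φ l') (u * mm l * k) := by
            simp only [Finset.sum_apply, Pi.smul_apply, smul_eq_mul]
    rw [heq]
    exact Submodule.sum_mem _ fun l hl =>
      Submodule.smul_mem _ _ (Submodule.subset_span ⟨⟨l, hmemSd l hl⟩, rfl⟩)
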